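/- Let {τᵢ} be the arrival times of a homogeneous Poisson process on (0,∞) with rate μ, let 0 < α < 1, and let {Qᵢ} be i.i.d. nonnegative random variables independent of the process with E[Qᵢ^α] < ∞. Then the series A = Σᵢ Qᵢ τᵢ^{-1/α} converges almost surely. -/

import Mathlib

open MeasureTheory ProbabilityTheory Finset Filter Real

/-- Bernoulli telescoping step: `s * (u+1)^(-(s+1)) ≤ u^(-s) - (u+1)^(-s)`. -/
lemma lePage_step {s u : ℝ} (hs : 0 < s) (hu : 1 ≤ u) :
    s * (u+1) ^ (-(s+1)) ≤ u ^ (-s) - (u+1) ^ (-s) := by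
  have hu0 : 0 < u := lt_of_lt_of_le one_pos hu
  have ht0 : 0 < u + 1 := by linarith
  have hq0 : 0 < u / (u+1) := div_pos hu0 ht0
  have key : 1 + s / (u+1) ≤ (u / (u+1)) ^ (-s) := by
    rcases le_or_gt s 1 with hs1 | hs1
    · have hneg : (-1:ℝ) ≤ -(1/(u+1)) := by
        rw [neg_le_neg_iff, div_le_one ht0]; linarith
      have hb := rpow_one_add_le_one_add_mul_self hneg hs.le hs1
      have e1 : 1 + (-(1/(u+1))) = u/(u+1) := by field_simp; ring
      rw [e1] at hb
      have hb' : (u/(u+1)) ^ s ≤ 1 - s/(u+1) := by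
        rw [mul_neg, mul_one_div] at hb; linarith
      have hpos2 : 0 < 1 - s/(u+1) := by
        have : s/(u+1) < 1 := by rw [div_lt_one ht0]; linarith
        linarith
      have h1 : 1 + s/(u+1) ≤ (1 - s/(u+1))⁻¹ := by
        rw [inv_eq_one_div, le_div_iff₀ hpos2]
        nlinarith [sq_nonneg (s/(u+1))]
      have h2 : (1 - s/(u+1))⁻¹ ≤ ((u/(u+1)) ^ s)⁻¹ :=
        inv_anti₀ (Real.rpow_pos_of_pos hq0 s) hb'
      rw [Real.rpow_neg hq0.le]
      exact h1.trans h2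
    · have hneg : (-1:ℝ) ≤ 1/u := by
        have : (0:ℝ) ≤ 1/u := by positivity
        linarith
      have hb := one_add_mul_self_le_rpow_one_add hneg hs1.le
      have e1 : 1 + 1/u = (u+1)/u := by field_simp
      rw [e1, mul_one_div] at hb
      -- hb : 1 + s / u ≤ ((u+1)/u) ^ s
      have e2 : (u/(u+1)) ^ (-s) = ((u+1)/u) ^ s := by
        rw [Real.rpow_neg hq0.le, ← Real.inv_rpow hq0.le, inv_div]
      rw [e2]
      have : s/(u+1) ≤ s/u := by gcongr; linarith
      linarith
  have hsplit : (u+1) ^ (-(s+1)) = (u+1) ^ (-s) * (u+1)⁻¹ := by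
    rw [show -(s+1) = -s + (-1) by ring, Real.rpow_add ht0, Real.rpow_neg_one]
  have hdiv : (u / (u+1)) ^ (-s) = u ^ (-s) / (u+1) ^ (-s) :=
    Real.div_rpow hu0.le ht0.le (-s)
  have hmul := mul_le_mul_of_nonneg_right key (Real.rpow_pos_of_pos ht0 (-s)).le
  rw [hdiv, div_mul_cancel₀ _ (Real.rpow_pos_of_pos ht0 (-s)).ne'] at hmul
  have hexp : (1 + s/(u+1)) * ((u+1) ^ (-s)) =
      (u+1) ^ (-s) + s * ((u+1) ^ (-s) * (u+1)⁻¹) := by ring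
  rw [hsplit]
  rw [hexp] at hmul
  linarith

/-- Tail estimate for the `p`-series with exponent `r > 1`. -/
lemma lePage_tail {r : ℝ} (hr : 1 < r) {M : ℕ} (hM : 1 ≤ M) (n : ℕ) :
    ∑ i ∈ Finset.Ico M n, ((i:ℝ)+1) ^ (-r) ≤ (M:ℝ) ^ (1-r) / (r-1) := by
  have hr0 : 0 < r - 1 := by linarith
  set f : ℕ → ℝ := fun i => ((i:ℝ)) ^ (-(r-1)) with hf
  have key : ∀ m : ℕ, M ≤ m → (r-1) * ((m:ℝ)+1) ^ (-r) ≤ f m - f (m+1) := by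
    intro m hm
    have h1 : (1:ℝ) ≤ (m:ℝ) := by exact_mod_cast hM.trans hm
    have := lePage_step hr0 h1
    rw [show (r-1)+1 = r by ring] at this
    simpa [hf] using this
  rw [le_div_iff₀ hr0]
  calc (∑ i ∈ Finset.Ico M n, ((i:ℝ)+1) ^ (-r)) * (r-1)
      = ∑ i ∈ Finset.Ico M n, (r-1) * ((i:ℝ)+1) ^ (-r) := by
        rw [Finset.sum_mul]; exact Finset.sum_congr rfl fun i _ => mul_comm _ _
    _ ≤ ∑ i ∈ Finset.Ico M n, (f i - f (i+1)) :=
        Finset.sum_le_sum fun i hi => key i (Finset.mem_Ico.1 hi).1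
    _ ≤ (M:ℝ) ^ (1-r) := by
        rcases le_or_gt n M with h | h
        · rw [Finset.Ico_eq_empty (by omega), Finset.sum_empty]
          positivity
        · rw [Finset.sum_Ico_eq_sum_range]
          have htel := Finset.sum_range_sub' (fun j => f (M + j)) (n - M)
          simp only [← add_assoc] at htel
          rw [htel]
          have h1 : 0 ≤ f (M + (n - M)) := Real.rpow_nonneg (Nat.cast_nonneg _) _
          have h2 : f (M + 0) = (M:ℝ) ^ (1-r) := by
            simp only [hf, add_zero]
            rw [show -(r-1) = 1-r by ring]
          linarith

/-- Deterministic bound: partial sums of `min (w * (i+1)^(-1/α)) 1` are bounded by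
`C * (1 + w^α)` with `C = 1 + 1/(1/α - 1)`. -/
lemma lePage_det_real {α : ℝ} (hα0 : 0 < α) (hα1 : α < 1) {w : ℝ} (hw : 0 ≤ w) (n : ℕ) :
    ∑ i ∈ Finset.range n, min (w * ((i:ℝ)+1) ^ (-(1/α))) 1
      ≤ (1 + 1/(1/α - 1)) * (1 + w ^ α) := by
  set r : ℝ := 1/α with hrdef
  have hr : 1 < r := by rw [hrdef, lt_div_iff₀ hα0]; linarith
  have hr0 : 0 < r - 1 := by linarith
  have hwα : 0 ≤ w ^ α := Real.rpow_nonneg hw α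
  set M : ℕ := max (⌈w ^ α⌉₊) 1 with hMdef
  have hM1 : 1 ≤ M := le_max_right _ _
  have hMle : (M:ℝ) ≤ w ^ α + 1 := by
    rw [hMdef, Nat.cast_max]
    apply max_le
    · exact (Nat.ceil_lt_add_one hwα).le
    · norm_num; linarith
  have hwM : w ^ α ≤ (M:ℝ) := by
    refine (Nat.le_ceil _).trans ?_
    exact_mod_cast le_max_left _ _
  set S : ℕ → ℝ := fun i => min (w * ((i:ℝ)+1) ^ (-r)) 1 with hS
  have hSnn : ∀ i, 0 ≤ S i := fun i =>
    le_min (mul_nonneg hw (Real.rpow_nonneg (by positivity) _)) zero_le_one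
  have hsplit := Finset.sum_filter_add_sum_filter_not (Finset.range n) (fun i => i < M) S
  -- first part
  have hA : ∑ i ∈ (Finset.range n).filter (fun i => i < M), S i ≤ (M:ℝ) := by
    calc ∑ i ∈ (Finset.range n).filter (fun i => i < M), S i
        ≤ ∑ _i ∈ (Finset.range n).filter (fun i => i < M), (1:ℝ) :=
          Finset.sum_le_sum fun i _ => min_le_right _ _
      _ = ((Finset.range n).filter (fun i => i < M)).card := by simp
      _ ≤ (M:ℝ) := by
          have hsub : (Finset.range n).filter (fun i => i < M) ⊆ Finset.range M := by
            intro i hi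
            exact Finset.mem_range.2 (Finset.mem_filter.1 hi).2
          have := Finset.card_le_card hsub
          simp only [Finset.card_range] at this
          exact_mod_cast this
  -- second part
  have hB : ∑ i ∈ (Finset.range n).filter (fun i => ¬ i < M), S i ≤ w ^ α / (r-1) := by
    have hB1 : ∑ i ∈ (Finset.range n).filter (fun i => ¬ i < M), S i
        ≤ ∑ i ∈ (Finset.range n).filter (fun i => ¬ i < M), w * ((i:ℝ)+1) ^ (-r) :=
      Finset.sum_le_sum fun i _ => min_le_left _ _
    have hB2 : ∑ i ∈ (Finset.range n).filter (fun i => ¬ i < M), w * ((i:ℝ)+1) ^ (-r)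
        ≤ ∑ i ∈ Finset.Ico M n, w * ((i:ℝ)+1) ^ (-r) := by
      apply Finset.sum_le_sum_of_subset_of_nonneg
      · intro i hi
        obtain ⟨h1, h2⟩ := Finset.mem_filter.1 hi
        exact Finset.mem_Ico.2 ⟨not_lt.1 h2, Finset.mem_range.1 h1⟩
      · intro i _ _
        exact mul_nonneg hw (Real.rpow_nonneg (by positivity) _)
    have hB3 : ∑ i ∈ Finset.Ico M n, w * ((i:ℝ)+1) ^ (-r)
        ≤ w * ((M:ℝ) ^ (1-r) / (r-1)) := by
      rw [← Finset.mul_sum]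
      exact mul_le_mul_of_nonneg_left (lePage_tail hr hM1 n) hw
    have hB4 : w * ((M:ℝ) ^ (1-r) / (r-1)) ≤ w ^ α / (r-1) := by
      rcases eq_or_lt_of_le hw with heq | hw0
      · rw [← heq]
        simp [Real.zero_rpow hα0.ne', le_refl, div_nonneg, hr0.le]
      · have h1 : (M:ℝ) ^ (1-r) ≤ (w ^ α) ^ (1-r) :=
          Real.rpow_le_rpow_of_nonpos (Real.rpow_pos_of_pos hw0 α) hwM (by linarith)
        have h2 : (w ^ α) ^ (1-r) = w ^ (α * (1-r)) := (Real.rpow_mul hw α (1-r)).symm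
        have h3 : w * w ^ (α * (1-r)) = w ^ α := by
          rw [show w * w ^ (α*(1-r)) = w ^ (1:ℝ) * w ^ (α*(1-r)) by rw [Real.rpow_one],
            ← Real.rpow_add hw0]
          congr 1
          rw [hrdef]
          field_simp
          ring
        have h6 : w * (M:ℝ) ^ (1-r) ≤ w ^ α := by
          calc w * (M:ℝ) ^ (1-r) ≤ w * w ^ (α * (1-r)) :=
                mul_le_mul_of_nonneg_left (h2 ▸ h1) hw
            _ = w ^ α := h3
        rw [show w * ((M:ℝ) ^ (1-r) / (r-1)) = (w * (M:ℝ) ^ (1-r))/(r-1) by ring]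
        gcongr
    linarith
  have hfin : w ^ α / (r-1) ≤ (1 + w ^ α)/(r-1) := by gcongr; linarith
  have hexp : (1 + 1/(r - 1)) * (1 + w ^ α) = 1 + w ^ α + (1 + w ^ α)/(r-1) := by
    field_simp
  rw [show (1:ℝ) + 1/(1/α - 1) = 1 + 1/(r-1) from rfl, hexp]
  linarith [hsplit, hA, hB, hMle]

/-- ENNReal version of the deterministic bound, valid for every real `w`. -/
lemma lePage_det {α : ℝ} (hα0 : 0 < α) (hα1 : α < 1) (w : ℝ) :
    ∑' i : ℕ, ENNReal.ofReal (min (w * ((i:ℝ)+1) ^ (-(1/α))) 1)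
      ≤ ENNReal.ofReal ((1 + 1/(1/α - 1)) * (1 + w ^ α)) := by
  rcases lt_or_ge w 0 with hw | hw
  · have hz : ∀ i : ℕ, ENNReal.ofReal (min (w * ((i:ℝ)+1) ^ (-(1/α))) 1) = 0 := by
      intro i
      rw [ENNReal.ofReal_eq_zero]
      exact (min_le_left _ _).trans
        (mul_nonpos_iff.2 (Or.inr ⟨hw.le, Real.rpow_nonneg (by positivity) _⟩))
    rw [tsum_congr hz, tsum_zero]
    exact zero_le
  · apply ENNReal.tsum_le_of_sum_range_le
    intro n
    rw [← ENNReal.ofReal_sum_of_nonneg]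
    · exact ENNReal.ofReal_le_ofReal (lePage_det_real hα0 hα1 hw n)
    · intro i _
      exact le_min (mul_nonneg hw (Real.rpow_nonneg (by positivity) _)) zero_le_one
/-- **A.s. convergence of the LePage series.**
Let `{τᵢ}` be the arrival times of a homogeneous Poisson process on `(0,∞)` with rate
`μrate` (partial sums of i.i.d. `Exp(μrate)` gaps), let `0 < α < 1`, and let `{Qᵢ}` be
i.i.d. nonnegative, independent of the process, with `E[Qᵢ^α] < ∞`.  Then
`A = Σᵢ Qᵢ τᵢ^{-1/α}` converges almost surely. -/
theorem lePage_series_converges_ae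
    {Ω : Type*} [MeasurableSpace Ω] (μ : Measure Ω) [IsProbabilityMeasure μ]
    (μrate α : ℝ) (hμrate : 0 < μrate) (hα0 : 0 < α) (hα1 : α < 1)
    (gap : ℕ → Ω → ℝ) (Q : ℕ → Ω → ℝ)
    (hmeas_gap : ∀ i, Measurable (gap i)) (hmeas_Q : ∀ i, Measurable (Q i))
    -- gaps and marks are jointly independent
    (h_indep : iIndepFun
      (Sum.elim gap Q) μ)
    -- gaps i.i.d. Exp(μrate): arrival times `τᵢ = Σ_{j≤i} gapⱼ`
    (h_gap_law : ∀ i, Measure.map (gap i) μ = expMeasure μrate)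
    -- the `Qᵢ` are i.i.d. nonnegative with finite α-moment
    (h_Q_iid : ∀ i, IdentDistrib (Q i) (Q 0) μ μ)
    (h_Q_nonneg : ∀ i, ∀ᵐ ω ∂μ, 0 ≤ Q i ω)
    (h_Q_moment : Integrable (fun ω => Q 0 ω ^ α) μ) :
    ∀ᵐ ω ∂μ, Summable fun i =>
      Q i ω * (∑ j ∈ Finset.range (i + 1), gap j ω) ^ (-(1 / α)) := by
  have hr1 : 1 < 1/α := by rw [lt_div_iff₀ hα0]; linarith
  set c : ℕ → ℝ := fun i => ((i:ℝ)+1) ^ (-(1/α)) with hc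
  have hcpos : ∀ i, 0 < c i := fun i => Real.rpow_pos_of_pos (by positivity) _
  -- gaps are a.s. positive
  have h_gap_pos : ∀ i, ∀ᵐ ω ∂μ, 0 < gap i ω := by
    intro i
    rw [ae_iff]
    have hset : {ω | ¬ 0 < gap i ω} = gap i ⁻¹' (Set.Iic 0) := by
      ext ω; simp [not_lt]
    rw [hset, ← Measure.map_apply (hmeas_gap i) measurableSet_Iic, h_gap_law i]
    show expMeasure μrate (Set.Iic 0) = 0
    rw [expMeasure, gammaMeasure, withDensity_apply _ measurableSet_Iic]
    have hns : ∀ᵐ x : ℝ ∂(volume : Measure ℝ), x ≠ 0 := by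
      rw [ae_iff]
      simpa using (Real.volume_singleton (a := 0))
    have h0 : ∀ᵐ x ∂((volume : Measure ℝ).restrict (Set.Iic (0:ℝ))),
        gammaPDF 1 μrate x = 0 := by
      rw [ae_restrict_iff' measurableSet_Iic]
      filter_upwards [hns] with x hx hmem
      exact gammaPDF_of_neg (lt_of_le_of_ne hmem hx)
    rw [lintegral_congr_ae h0]
    simp
  -- measurability of the truncated summands
  have hFmeas : ∀ i : ℕ, Measurable (fun x : ℝ => ENNReal.ofReal (min (x * c i) 1)) :=
    fun i => ((measurable_id.mul_const (c i)).min measurable_const).ennreal_ofReal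
  have hGmeas : ∀ i : ℕ, Measurable (fun ω => ENNReal.ofReal (min (Q i ω * c i) 1)) :=
    fun i => (((hmeas_Q i).mul_const (c i)).min measurable_const).ennreal_ofReal
  have hGmeas0 : ∀ i : ℕ, Measurable (fun ω => ENNReal.ofReal (min (Q 0 ω * c i) 1)) :=
    fun i => (((hmeas_Q 0).mul_const (c i)).min measurable_const).ennreal_ofReal
  -- Step 1: a.e. summability of `Q i ω * c i`
  have hint_eq : ∀ i, (∫⁻ ω, ENNReal.ofReal (min (Q i ω * c i) 1) ∂μ)
      = ∫⁻ ω, ENNReal.ofReal (min (Q 0 ω * c i) 1) ∂μ := by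
    intro i
    rw [← lintegral_map (hFmeas i) (hmeas_Q i), (h_Q_iid i).map_eq,
      lintegral_map (hFmeas i) (hmeas_Q 0)]
  have hCnn : (0:ℝ) ≤ 1 + 1/(1/α - 1) := by
    have : (0:ℝ) ≤ 1/(1/α - 1) := by
      apply div_nonneg zero_le_one; linarith
    linarith
  have hI : (∫⁻ ω, ENNReal.ofReal (Q 0 ω ^ α) ∂μ) < ⊤ := by
    refine lt_of_le_of_lt (lintegral_mono fun ω => Real.ofReal_le_enorm _) ?_
    exact h_Q_moment.hasFiniteIntegral
  have key1 : (∫⁻ ω, ∑' i, ENNReal.ofReal (min (Q i ω * c i) 1) ∂μ) < ⊤ := by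
    rw [lintegral_tsum (fun i => (hGmeas i).aemeasurable)]
    calc ∑' i, ∫⁻ ω, ENNReal.ofReal (min (Q i ω * c i) 1) ∂μ
        = ∑' i, ∫⁻ ω, ENNReal.ofReal (min (Q 0 ω * c i) 1) ∂μ := tsum_congr hint_eq
      _ = ∫⁻ ω, ∑' i, ENNReal.ofReal (min (Q 0 ω * c i) 1) ∂μ :=
          (lintegral_tsum fun i => (hGmeas0 i).aemeasurable).symm
      _ ≤ ∫⁻ ω, ENNReal.ofReal ((1 + 1/(1/α - 1)) * (1 + Q 0 ω ^ α)) ∂μ :=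
          lintegral_mono fun ω => lePage_det hα0 hα1 (Q 0 ω)
      _ ≤ ∫⁻ ω, ENNReal.ofReal (1 + 1/(1/α - 1)) * (1 + ENNReal.ofReal (Q 0 ω ^ α)) ∂μ := by
          apply lintegral_mono
          intro ω
          dsimp only
          rw [ENNReal.ofReal_mul hCnn]
          apply mul_le_mul_right
          calc ENNReal.ofReal (1 + Q 0 ω ^ α)
              ≤ ENNReal.ofReal 1 + ENNReal.ofReal (Q 0 ω ^ α) := ENNReal.ofReal_add_le
            _ = 1 + ENNReal.ofReal (Q 0 ω ^ α) := by rw [ENNReal.ofReal_one]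
      _ = ENNReal.ofReal (1 + 1/(1/α - 1)) *
            ∫⁻ ω, (1 + ENNReal.ofReal (Q 0 ω ^ α)) ∂μ :=
          lintegral_const_mul' _ _ ENNReal.ofReal_ne_top
      _ < ⊤ := by
          apply ENNReal.mul_lt_top ENNReal.ofReal_lt_top
          rw [lintegral_add_left measurable_const, lintegral_one, measure_univ]
          exact ENNReal.add_lt_top.2 ⟨ENNReal.one_lt_top, hI⟩
  have h_ae_fin : ∀ᵐ ω ∂μ, (∑' i, ENNReal.ofReal (min (Q i ω * c i) 1)) < ⊤ :=
    ae_lt_top (Measurable.ennreal_tsum hGmeas) key1.ne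
  have h_Qnn : ∀ᵐ ω ∂μ, ∀ i, 0 ≤ Q i ω := ae_all_iff.2 h_Q_nonneg
  have hstep1 : ∀ᵐ ω ∂μ, Summable (fun i => Q i ω * c i) := by
    filter_upwards [h_ae_fin, h_Qnn] with ω hfin hQ
    have hnn : ∀ i, 0 ≤ min (Q i ω * c i) 1 := fun i =>
      le_min (mul_nonneg (hQ i) (hcpos i).le) zero_le_one
    have hsum_min : Summable (fun i => min (Q i ω * c i) 1) := by
      have h1 := ENNReal.summable_toReal hfin.ne
      refine (summable_congr ?_).1 h1
      intro i
      exact ENNReal.toReal_ofReal (hnn i)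
    have h0 : Filter.Tendsto (fun i => min (Q i ω * c i) 1) Filter.atTop (nhds 0) :=
      hsum_min.tendsto_atTop_zero
    have hev : ∀ᶠ i in Filter.atTop, min (Q i ω * c i) 1 < 1 :=
      h0.eventually (eventually_lt_nhds one_pos)
    obtain ⟨N, hN⟩ := Filter.eventually_atTop.1 hev
    have hshift : Summable (fun j => min (Q (j+N) ω * c (j+N)) 1) :=
      (summable_nat_add_iff N).2 hsum_min
    have heq : ∀ j, min (Q (j+N) ω * c (j+N)) 1 = Q (j+N) ω * c (j+N) := by
      intro j
      have h2 := hN (j+N) (Nat.le_add_left N j)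
      rcases le_or_gt (Q (j+N) ω * c (j+N)) 1 with h | h
      · exact min_eq_left h
      · rw [min_eq_right h.le] at h2
        exact absurd h2 (lt_irrefl 1)
    exact (summable_nat_add_iff N).1 ((summable_congr heq).1 hshift)
  -- Step 2: SLLN for truncated gaps
  set X : ℕ → Ω → ℝ := fun i ω => min (gap i ω) 1 with hX
  have hXmeas : ∀ i, Measurable (X i) := fun i => (hmeas_gap i).min measurable_const
  have hXint : Integrable (X 0) μ := by
    refine Integrable.mono' (integrable_const 1) (hXmeas 0).aestronglyMeasurable ?_
    filter_upwards [h_gap_pos 0] with ω h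
    rw [Real.norm_eq_abs, abs_le]
    constructor
    · have := le_min h.le zero_le_one
      linarith
    · exact min_le_right _ _
  have hXindep : Pairwise (Function.onFun (IndepFun · · μ) X) := by
    intro i j hij
    have h1 : IndepFun (gap i) (gap j) μ :=
      h_indep.indepFun (show (Sum.inl i : ℕ ⊕ ℕ) ≠ Sum.inl j by simpa using hij)
    exact h1.comp (measurable_id.min measurable_const) (measurable_id.min measurable_const)
  have hXident : ∀ i, IdentDistrib (X i) (X 0) μ μ := by
    intro i
    have hgid : IdentDistrib (gap i) (gap 0) μ μ :=
      ⟨(hmeas_gap i).aemeasurable, (hmeas_gap 0).aemeasurable,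
        by rw [h_gap_law i, h_gap_law 0]⟩
    exact hgid.comp (measurable_id.min measurable_const)
  have hslln := strong_law_ae_real X hXint hXindep hXident
  have hXnn : 0 ≤ᵐ[μ] X 0 := by
    filter_upwards [h_gap_pos 0] with ω h
    exact le_min h.le zero_le_one
  have hm : 0 < μ[X 0] := by
    refine (integral_pos_iff_support_of_nonneg_ae hXnn hXint).2 ?_
    by_contra h
    push_neg at h
    have hz : μ (Function.support (X 0)) = 0 := le_antisymm h zero_le
    have hz' : ∀ᵐ ω ∂μ, X 0 ω = 0 := by
      rw [ae_iff]
      simpa [Function.support] using hz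
    obtain ⟨ω, h1, h2⟩ := (hz'.and (h_gap_pos 0)).exists
    have h3 : (0:ℝ) < min (gap 0 ω) 1 := lt_min h2 one_pos
    rw [show min (gap 0 ω) 1 = X 0 ω from rfl, h1] at h3
    exact lt_irrefl 0 h3
  -- Step 3: combine
  filter_upwards [hstep1, hslln, h_Qnn, ae_all_iff.2 h_gap_pos] with ω hsum htend hQ hgap
  set m : ℝ := μ[X 0] with hmdef
  have hev : ∀ᶠ n : ℕ in Filter.atTop, m/2 ≤ (∑ i ∈ Finset.range n, X i ω)/(n:ℝ) :=
    htend.eventually (eventually_ge_nhds (by linarith))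
  obtain ⟨N0, hN0⟩ := Filter.eventually_atTop.1 hev
  set N : ℕ := N0 + 1 with hNdef
  have hbound : ∀ j : ℕ, Q (j+N) ω * (∑ k ∈ Finset.range ((j+N) + 1), gap k ω) ^ (-(1/α))
      ≤ (m/2) ^ (-(1/α)) * (Q (j+N) ω * c (j+N)) := by
    intro j
    set i : ℕ := j + N with hidef
    have havg := hN0 (i+1) (by omega)
    have hipos : (0:ℝ) < (i:ℝ) + 1 := by positivity
    have hcast : ((i+1 : ℕ):ℝ) = (i:ℝ) + 1 := by push_cast; ring
    rw [hcast] at havg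
    have hS1 : m/2 * ((i:ℝ)+1) ≤ ∑ k ∈ Finset.range (i+1), X k ω :=
      (le_div_iff₀ hipos).1 havg
    have hS2 : ∑ k ∈ Finset.range (i+1), X k ω ≤ ∑ k ∈ Finset.range (i+1), gap k ω :=
      Finset.sum_le_sum fun k _ => min_le_left _ _
    have hτpos : 0 < m/2 * ((i:ℝ)+1) := by positivity
    have hτge : m/2 * ((i:ℝ)+1) ≤ ∑ k ∈ Finset.range (i+1), gap k ω := hS1.trans hS2
    have h1 : (∑ k ∈ Finset.range (i+1), gap k ω) ^ (-(1/α))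
        ≤ (m/2 * ((i:ℝ)+1)) ^ (-(1/α)) :=
      Real.rpow_le_rpow_of_nonpos hτpos hτge (by linarith)
    have h2 : (m/2 * ((i:ℝ)+1)) ^ (-(1/α)) = (m/2) ^ (-(1/α)) * c i :=
      Real.mul_rpow (by linarith) (by positivity)
    calc Q i ω * (∑ k ∈ Finset.range (i+1), gap k ω) ^ (-(1/α))
        ≤ Q i ω * ((m/2) ^ (-(1/α)) * c i) :=
          mul_le_mul_of_nonneg_left (h1.trans_eq h2) (hQ i)
      _ = (m/2) ^ (-(1/α)) * (Q i ω * c i) := by ring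
  have hsum2 : Summable (fun j => (m/2) ^ (-(1/α)) * (Q (j+N) ω * c (j+N))) :=
    ((summable_nat_add_iff N).2 hsum).mul_left _
  have hnn3 : ∀ j : ℕ, 0 ≤ Q (j+N) ω * (∑ k ∈ Finset.range ((j+N) + 1), gap k ω) ^ (-(1/α)) := by
    intro j
    apply mul_nonneg (hQ _)
    apply Real.rpow_nonneg
    apply le_of_lt
    exact Finset.sum_pos (fun k _ => hgap k) Finset.nonempty_range_add_one
  have hsum3 : Summable (fun j => Q (j+N) ω *
      (∑ k ∈ Finset.range ((j+N) + 1), gap k ω) ^ (-(1/α))) :=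
    Summable.of_nonneg_of_le hnn3 hbound hsum2
  exact (summable_nat_add_iff N).1 hsum3
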